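/- Injectivity of the Spatial Spherical Radon Transform on Spherical Trees (Theorem 4.3): Let d, d_θ, k ≥ 1, let h : 𝕊^d → 𝕊^{d_θ} be an injective continuous map, and let α be an O(d_θ+1)-invariant spherical splitting map on 𝕊^{d_θ} with k edges. Let μ, ν be finite Borel measures on 𝕊^d. If for every spherical tree 𝒯 = (x, y_1, …, y_k) with k edges in 𝕊^{d_θ} and every index i ∈ {1,…,k}, the pushforward under the map y ↦ arccos ⟪x, h(y)⟫ of the measure μ weighted with density y ↦ α(h(y),𝒯)_i equals the pushforward under y ↦ arccos ⟪x, h(y)⟫ of ν weighted with density y ↦ α(h(y),𝒯)_i, then μ = ν. -/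

import Mathlib

open MeasureTheory
open scoped InnerProductSpace

noncomputable section

/-- The unit sphere `𝕊^n ⊆ ℝ^{n+1}`. -/
abbrev USph (n : ℕ) := Metric.sphere (0 : EuclideanSpace ℝ (Fin (n + 1))) 1

/-- A spherical tree with `k` edges in `𝕊^n`: a root `x` together with `k` edge
directions `y_i`, all on the sphere, with `⟪x, y_i⟫ = 0`. -/
abbrev SphTree (n k : ℕ) :=
  {T : USph n × (Fin k → USph n) //
    ∀ i, ⟪(T.1 : EuclideanSpace ℝ (Fin (n + 1))),
      (T.2 i : EuclideanSpace ℝ (Fin (n + 1)))⟫_ℝ = 0}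

/-- The action of a linear isometry equivalence on the unit sphere. -/
def sphIso {n : ℕ} (Q : EuclideanSpace ℝ (Fin (n + 1)) ≃ₗᵢ[ℝ] EuclideanSpace ℝ (Fin (n + 1)))
    (z : USph n) : USph n :=
  ⟨Q (z : EuclideanSpace ℝ (Fin (n + 1))), by
    rw [mem_sphere_zero_iff_norm, Q.norm_map]
    exact mem_sphere_zero_iff_norm.mp z.2⟩

/-- The action of the orthogonal group `O(n+1)` on spherical trees. -/
def actTree {n k : ℕ} (Q : EuclideanSpace ℝ (Fin (n + 1)) ≃ₗᵢ[ℝ] EuclideanSpace ℝ (Fin (n + 1)))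
    (T : SphTree n k) : SphTree n k :=
  ⟨(sphIso Q T.1.1, fun i => sphIso Q (T.1.2 i)), by
    intro i
    simpa [sphIso, Q.inner_map_map] using T.2 i⟩

open Metric Set Filter
open scoped ENNReal

lemma eq_of_forall_closedBall_eq {β : Type*} [MetricSpace β] [MeasurableSpace β] [BorelSpace β]
    [SecondCountableTopology β] [HasBesicovitchCovering β] [Nonempty β]
    (σ τ : Measure β) [IsFiniteMeasure σ] [IsFiniteMeasure τ]
    (hballs : ∀ (c : β) (r : ℝ), σ (closedBall c r) = τ (closedBall c r)) : σ = τ := by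
  have hnull : σ {x | ∃ r > (0:ℝ), σ (closedBall x r) = 0} = 0 := by
    apply measure_null_of_locally_null
    rintro x ⟨r, hr, hxr⟩
    exact ⟨closedBall x r, mem_nhdsWithin_of_mem_nhds (closedBall_mem_nhds x hr), hxr⟩
  have hae : ∀ᵐ x ∂σ, ∀ r > (0:ℝ), σ (closedBall x r) ≠ 0 := by
    rw [ae_iff]
    convert hnull using 2
    ext x
    push_neg
    rfl
  have h2 : ∀ᵐ x ∂σ, τ.rnDeriv σ x = 1 := by
    filter_upwards [Besicovitch.ae_tendsto_rnDeriv τ σ, hae] with x hx hx'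
    refine tendsto_nhds_unique hx ?_
    refine tendsto_const_nhds.congr' ?_
    filter_upwards [self_mem_nhdsWithin] with r hr
    rw [← hballs, ENNReal.div_self (hx' r hr) (measure_ne_top σ _)]
  have hwd : σ.withDensity (τ.rnDeriv σ) = σ := by
    rw [withDensity_congr_ae h2]; exact withDensity_one
  have hdecomp : τ = τ.singularPart σ + σ := by
    conv_lhs => rw [τ.haveLebesgueDecomposition_add σ]
    rw [hwd]
  have hball0 : ∀ (c : β) (r : ℝ), τ.singularPart σ (closedBall c r) = 0 := by
    intro c r
    have h' : σ (closedBall c r) + τ.singularPart σ (closedBall c r)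
        = σ (closedBall c r) + 0 := by
      rw [add_zero, add_comm, ← Measure.add_apply, ← hdecomp, hballs c r]
    exact (ENNReal.add_right_inj (measure_ne_top σ _)).mp h'
  have hs0 : τ.singularPart σ = 0 := by
    rw [← Measure.measure_univ_eq_zero]
    inhabit β
    have hcover : (univ : Set β) ⊆ ⋃ n : ℕ, closedBall default n := by
      intro x _
      obtain ⟨n, hn⟩ := exists_nat_ge (dist x default)
      exact mem_iUnion.2 ⟨n, mem_closedBall.2 hn⟩
    refine le_antisymm ?_ zero_le
    calc τ.singularPart σ univ ≤ ∑' n : ℕ, τ.singularPart σ (closedBall default n) :=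
          (measure_mono hcover).trans (measure_iUnion_le _)
      _ = 0 := by simp [hball0]
  rw [hdecomp, hs0, zero_add]

/-- Injectivity of the Spatial Spherical Radon Transform on Spherical Trees. -/
theorem spatial_spherical_radon_transform_spherical_trees_injective
    (d dθ k : ℕ) (hd : 1 ≤ d) (hdθ : 1 ≤ dθ) (hk : 1 ≤ k)
    (h : USph d → USph dθ) (h_inj : Function.Injective h) (h_cont : Continuous h)
    (α : USph dθ × SphTree dθ k → Fin k → ℝ)
    (hα_cont : Continuous α)
    (hα_simplex : ∀ p, α p ∈ stdSimplex ℝ (Fin k))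
    (hα_inv : ∀ (Q : EuclideanSpace ℝ (Fin (dθ + 1)) ≃ₗᵢ[ℝ] EuclideanSpace ℝ (Fin (dθ + 1)))
      (z : USph dθ) (T : SphTree dθ k),
      α (sphIso Q z, actTree Q T) = α (z, T))
    (μ ν : Measure (USph d)) [IsFiniteMeasure μ] [IsFiniteMeasure ν]
    (heq : ∀ (T : SphTree dθ k) (i : Fin k),
      (μ.withDensity fun y => ENNReal.ofReal (α (h y, T) i)).map
          (fun y => Real.arccos ⟪(T.1.1 : EuclideanSpace ℝ (Fin (dθ + 1))),
            (h y : EuclideanSpace ℝ (Fin (dθ + 1)))⟫_ℝ)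
        = (ν.withDensity fun y => ENNReal.ofReal (α (h y, T) i)).map
          (fun y => Real.arccos ⟪(T.1.1 : EuclideanSpace ℝ (Fin (dθ + 1))),
            (h y : EuclideanSpace ℝ (Fin (dθ + 1)))⟫_ℝ)) :
    μ = ν := by
  set E := EuclideanSpace ℝ (Fin (dθ + 1))
  set H : USph d → E := fun y => (h y : E) with hH_def
  have hH_cont : Continuous H := continuous_subtype_val.comp h_cont
  have hH_meas : Measurable H := hH_cont.measurable
  have hHnorm : ∀ y, ‖H y‖ = 1 := fun y => mem_sphere_zero_iff_norm.mp (h y).2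
  -- Step 1: pushforwards along inner products with sphere points agree.
  have key : ∀ x : USph dθ,
      μ.map (fun y => ⟪(x : E), H y⟫_ℝ) = ν.map (fun y => ⟪(x : E), H y⟫_ℝ) := by
    intro x
    -- find a unit vector orthogonal to x
    obtain ⟨w, hw⟩ : ∃ w : USph dθ, ⟪(x : E), (w : E)⟫_ℝ = 0 := by
      have hxne : (x : E) ≠ 0 := by
        intro h0
        have := mem_sphere_zero_iff_norm.mp x.2
        rw [h0] at this; simp at this
      set U : Submodule ℝ E := ℝ ∙ (x : E)
      have hfin : Module.finrank ℝ U + Module.finrank ℝ Uᗮ = dθ + 1 := by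
        rw [U.finrank_add_finrank_orthogonal, finrank_euclideanSpace_fin]
      have hU : Module.finrank ℝ U = 1 := finrank_span_singleton hxne
      have hpos : 0 < Module.finrank ℝ Uᗮ := by omega
      have : Nontrivial Uᗮ := Module.finrank_pos_iff.mp hpos
      obtain ⟨v, hv⟩ := exists_ne (0 : Uᗮ)
      have hv1 : (v : E) ≠ 0 := fun h0 => hv (Subtype.coe_injective h0)
      refine ⟨⟨‖(v : E)‖⁻¹ • (v : E), ?_⟩, ?_⟩
      · rw [mem_sphere_zero_iff_norm]
        exact norm_smul_inv_norm hv1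
      · have := v.2
        rw [Submodule.mem_orthogonal] at this
        have hx0 := this (x : E) (Submodule.mem_span_singleton_self _)
        simp only [real_inner_smul_right, hx0, mul_zero]
    set T : SphTree dθ k := ⟨(x, fun _ => w), fun _ => hw⟩ with hT_def
    set f : USph d → ℝ := fun y => Real.arccos ⟪(x : E), H y⟫_ℝ with hf_def
    have hf_cont : Continuous f :=
      Real.continuous_arccos.comp (continuous_const.inner hH_cont)
    have hf : Measurable f := hf_cont.measurable
    set dd : Fin k → USph d → ℝ≥0∞ := fun i y => ENNReal.ofReal (α (h y, T) i) with hdd_def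
    have hdd : ∀ i, Measurable (dd i) := by
      intro i
      exact (((continuous_apply i).comp
        (hα_cont.comp (h_cont.prodMk continuous_const))).measurable).ennreal_ofReal
    have hsum : ∀ y, ∑ i, dd i y = 1 := by
      intro y
      rw [← ENNReal.ofReal_sum_of_nonneg fun i _ => (hα_simplex (h y, T)).1 i]
      rw [(hα_simplex (h y, T)).2]
      exact ENNReal.ofReal_one
    have hmap : ∀ (ρ : Measure (USph d)),
        ρ.map f = ∑ i : Fin k, (ρ.withDensity (dd i)).map f := by
      intro ρ
      ext s hs
      rw [Measure.map_apply hf hs, Measure.finset_sum_apply]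
      calc ρ (f ⁻¹' s) = ∫⁻ y in f ⁻¹' s, 1 ∂ρ := by simp
        _ = ∫⁻ y in f ⁻¹' s, ∑ i, dd i y ∂ρ := by
            refine lintegral_congr fun y => (hsum y).symm
        _ = ∑ i, ∫⁻ y in f ⁻¹' s, dd i y ∂ρ :=
            lintegral_finset_sum _ fun i _ => hdd i
        _ = ∑ i : Fin k, (ρ.withDensity (dd i)).map f s := by
            refine Finset.sum_congr rfl fun i _ => ?_
            rw [Measure.map_apply hf hs, withDensity_apply _ (hf hs)]
    have harccos : μ.map f = ν.map f := by
      rw [hmap μ, hmap ν]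
      exact Finset.sum_congr rfl fun i _ => by rw [heq T i]
    have hcos : ∀ (ρ : Measure (USph d)),
        (ρ.map f).map Real.cos = ρ.map (fun y => ⟪(x : E), H y⟫_ℝ) := by
      intro ρ
      rw [Measure.map_map Real.measurable_cos hf]
      congr 1
      funext y
      have hb : |⟪(x : E), H y⟫_ℝ| ≤ 1 := by
        have := abs_real_inner_le_norm (x : E) (H y)
        rwa [hHnorm, mem_sphere_zero_iff_norm.mp x.2, one_mul] at this
      exact Real.cos_arccos (neg_le_of_abs_le hb) (le_of_abs_le hb)
    rw [← hcos μ, ← hcos ν, harccos]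
  have huniv : μ Set.univ = ν Set.univ := by
    have hx : ∃ x : USph dθ, True := ⟨⟨EuclideanSpace.single 0 1, by
      simp [mem_sphere_zero_iff_norm, EuclideanSpace.norm_single]⟩, trivial⟩
    obtain ⟨x, -⟩ := hx
    have hgm : Measurable (fun y => ⟪(x : E), H y⟫_ℝ) :=
      (continuous_const.inner hH_cont).measurable
    have h0 := congrArg (fun m : Measure ℝ => m Set.univ) (key x)
    simp only [Measure.map_apply hgm MeasurableSet.univ, Set.preimage_univ] at h0
    exact h0
  -- Step 2: pushforwards to E agree on closed balls
  have hballs : ∀ (c : E) (r : ℝ), (μ.map H) (closedBall c r) = (ν.map H) (closedBall c r) := by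
    intro c r
    rw [Measure.map_apply hH_meas measurableSet_closedBall,
      Measure.map_apply hH_meas measurableSet_closedBall]
    rcases lt_or_ge r 0 with hr | hr
    · rw [closedBall_eq_empty.2 hr]; simp
    rcases eq_or_ne c 0 with rfl | hc
    · have : H ⁻¹' closedBall 0 r = if 1 ≤ r then Set.univ else ∅ := by
        ext y
        simp only [mem_preimage, mem_closedBall, dist_zero_right, hHnorm y]
        split_ifs with h1 <;> simp [h1]
      rw [this]
      split_ifs <;> simp [huniv]
    · have hc0 : 0 < ‖c‖ := norm_pos_iff.mpr hc
      set x : USph dθ := ⟨‖c‖⁻¹ • c, mem_sphere_zero_iff_norm.mpr (norm_smul_inv_norm hc)⟩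
      set t : ℝ := (1 + ‖c‖ ^ 2 - r ^ 2) / (2 * ‖c‖) with ht_def
      have hset : H ⁻¹' closedBall c r = (fun y => ⟪(x : E), H y⟫_ℝ) ⁻¹' Ici t := by
        ext y
        simp only [mem_preimage, mem_closedBall, mem_Ici]
        have hA : ‖H y - c‖ ^ 2 = 1 - 2 * ⟪c, H y⟫_ℝ + ‖c‖ ^ 2 := by
          rw [norm_sub_sq_real, hHnorm y, real_inner_comm]; ring
        have hB : ⟪(x : E), H y⟫_ℝ = ‖c‖⁻¹ * ⟪c, H y⟫_ℝ := real_inner_smul_left _ _ _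
        have hinv : ‖c‖⁻¹ * ‖c‖ = 1 := inv_mul_cancel₀ hc0.ne'
        rw [dist_eq_norm, hB, ht_def, div_le_iff₀ (by positivity)]
        constructor
        · intro hdr
          have h2 : ‖H y - c‖ ^ 2 ≤ r ^ 2 := by
            have := pow_le_pow_left₀ (norm_nonneg _) hdr 2
            exact this
          rw [hA] at h2
          nlinarith
        · intro ht2
          have h2 : ‖H y - c‖ ^ 2 ≤ r ^ 2 := by rw [hA]; nlinarith
          calc ‖H y - c‖ = Real.sqrt (‖H y - c‖ ^ 2) := (Real.sqrt_sq (norm_nonneg _)).symm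
            _ ≤ Real.sqrt (r ^ 2) := Real.sqrt_le_sqrt h2
            _ = r := Real.sqrt_sq hr
      rw [hset]
      have hg : Measurable (fun y => ⟪(x : E), H y⟫_ℝ) :=
        (continuous_const.inner hH_cont).measurable
      rw [← Measure.map_apply hg measurableSet_Ici, ← Measure.map_apply hg measurableSet_Ici,
        key x]
  -- Step 3: conclude
  have hHinj : Function.Injective H := fun a b hab => h_inj (Subtype.coe_injective hab)
  have hemb : MeasurableEmbedding H :=
    (hH_cont.isClosedEmbedding hHinj).measurableEmbedding
  have hσ : μ.map H = ν.map H := by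
    haveI : IsFiniteMeasure (μ.map H) := Measure.isFiniteMeasure_map μ H
    haveI : IsFiniteMeasure (ν.map H) := Measure.isFiniteMeasure_map ν H
    exact eq_of_forall_closedBall_eq _ _ hballs
  calc μ = (μ.map H).comap H := (hemb.comap_map μ).symm
    _ = (ν.map H).comap H := by rw [hσ]
    _ = ν := hemb.comap_map ν
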